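/- Let A be a finite nonempty index set, M > 0, and ε ∈ (0, M/|A|]. Let Δ_ε = {u : A → ℝ | u_a ≥ ε for all a ∈ A and Σ_{a∈A} u_a = M}, equipped with the spread metric D(u, v) = log( (max_{a∈A} u_a/v_a) / (min_{a∈A} u_a/v_a) ). Then (Δ_ε, D) is a nonempty complete metric space. -/

import Mathlib

set_option linter.unusedSectionVars false

section H
variable {A : Type*} [Fintype A] [Nonempty A]

lemma TSS_bddAbove (f : A → ℝ) : BddAbove (Set.range f) := (Set.finite_range f).bddAbove
lemma TSS_bddBelow (f : A → ℝ) : BddBelow (Set.range f) := (Set.finite_range f).bddBelow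

lemma TSS_iInf_pos {f : A → ℝ} (hf : ∀ a, 0 < f a) : 0 < ⨅ a, f a := by
  obtain ⟨x, hx⟩ := Finite.exists_min f
  exact lt_of_lt_of_le (hf x) (le_ciInf hx)

lemma TSS_iInf_le_iSup (f : A → ℝ) : (⨅ a, f a) ≤ ⨆ a, f a := by
  have a := Classical.arbitrary A
  exact (ciInf_le (TSS_bddBelow f) a).trans (le_ciSup (TSS_bddAbove f) a)

lemma TSS_iSup_pos {f : A → ℝ} (hf : ∀ a, 0 < f a) : 0 < ⨆ a, f a :=
  lt_of_lt_of_le (TSS_iInf_pos hf) (TSS_iInf_le_iSup f)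

lemma TSS_iSup_inv {f : A → ℝ} (hf : ∀ a, 0 < f a) :
    (⨆ a, f a) = (⨅ a, (f a)⁻¹)⁻¹ := by
  obtain ⟨x, hx⟩ := Finite.exists_max f
  have h1 : (⨆ a, f a) = f x :=
    le_antisymm (ciSup_le hx) (le_ciSup (TSS_bddAbove f) x)
  have h2 : (⨅ a, (f a)⁻¹) = (f x)⁻¹ :=
    le_antisymm (ciInf_le (TSS_bddBelow _) x)
      (le_ciInf fun a => one_div (f x) ▸ one_div (f a) ▸
        one_div_le_one_div_of_le (hf a) (hx a))
  rw [h1, h2, inv_inv]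

variable {u v w : A → ℝ}

/-- the quotient `Q = sup/inf` is symmetric. -/
lemma TSS_Q_symm (hu : ∀ a, 0 < u a) (hv : ∀ a, 0 < v a) :
    (⨆ a, v a / u a) / (⨅ a, v a / u a) = (⨆ a, u a / v a) / (⨅ a, u a / v a) := by
  have h1 : (⨆ a, v a / u a) = (⨅ a, u a / v a)⁻¹ := by
    rw [TSS_iSup_inv (fun a => div_pos (hv a) (hu a))]
    congr 1
    exact iInf_congr fun a => (inv_div _ _)
  have h2 : (⨅ a, v a / u a) = (⨆ a, u a / v a)⁻¹ := by
    rw [TSS_iSup_inv (fun a => div_pos (hu a) (hv a)), inv_inv]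
    exact iInf_congr fun a => (inv_div _ _).symm
  rw [h1, h2, inv_div_inv]

lemma TSS_one_le_Q (hu : ∀ a, 0 < u a) (hv : ∀ a, 0 < v a) :
    1 ≤ (⨆ a, u a / v a) / (⨅ a, u a / v a) :=
  (one_le_div (TSS_iInf_pos fun a => div_pos (hu a) (hv a))).2 (TSS_iInf_le_iSup _)

lemma TSS_Q_pos (hu : ∀ a, 0 < u a) (hv : ∀ a, 0 < v a) :
    0 < (⨆ a, u a / v a) / (⨅ a, u a / v a) :=
  lt_of_lt_of_le one_pos (TSS_one_le_Q hu hv)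

/-- if sums agree, the sup of ratios is ≥ 1 -/
lemma TSS_one_le_sup (hu : ∀ a, 0 < u a) (hv : ∀ a, 0 < v a)
    (hs : ∑ a, u a = ∑ a, v a) : 1 ≤ ⨆ a, u a / v a := by
  by_contra h
  push_neg at h
  have : ∑ a, u a < ∑ a, v a := by
    refine Finset.sum_lt_sum_of_nonempty Finset.univ_nonempty fun a _ => ?_
    have := lt_of_le_of_lt (le_ciSup (TSS_bddAbove _) a) h
    exact (div_lt_one (hv a)).1 this
  exact absurd hs (ne_of_lt this)

lemma TSS_inf_le_one (hu : ∀ a, 0 < u a) (hv : ∀ a, 0 < v a)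
    (hs : ∑ a, u a = ∑ a, v a) : (⨅ a, u a / v a) ≤ 1 := by
  by_contra h
  push_neg at h
  have : ∑ a, v a < ∑ a, u a := by
    refine Finset.sum_lt_sum_of_nonempty Finset.univ_nonempty fun a _ => ?_
    have := lt_of_lt_of_le h (ciInf_le (TSS_bddBelow _) a)
    exact (one_lt_div (hv a)).1 this
  exact absurd hs (ne_of_gt this)

/-- one-sided coordinate bound: `u a - v a ≤ M (Q - 1)` when both sum to `M`. -/
lemma TSS_sub_le {M : ℝ} (hu : ∀ a, 0 < u a) (hv : ∀ a, 0 < v a)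
    (hsu : ∑ a, u a = M) (hsv : ∑ a, v a = M) (a : A) :
    u a - v a ≤ M * ((⨆ a, u a / v a) / (⨅ a, u a / v a) - 1) := by
  set S := ⨆ a, u a / v a with hS
  set I := ⨅ a, u a / v a with hI
  have hIpos : 0 < I := TSS_iInf_pos fun a => div_pos (hu a) (hv a)
  have hIle : I ≤ 1 := TSS_inf_le_one hu hv (hsu.trans hsv.symm)
  have hSnn : (0:ℝ) ≤ S :=
    le_trans zero_le_one (TSS_one_le_sup hu hv (hsu.trans hsv.symm))
  have hSQ : S ≤ S / I := by
    rw [le_div_iff₀ hIpos]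
    exact mul_le_of_le_one_right hSnn hIle
  have hratio : u a / v a ≤ S / I := by
    refine le_trans ?_ hSQ
    rw [hS]
    exact le_ciSup (TSS_bddAbove fun b => u b / v b) a
  have hva : u a ≤ v a * (S / I) := by
    rw [mul_comm]; exact (div_le_iff₀ (hv a)).1 hratio
  have hvM : v a ≤ M := by
    rw [← hsv]
    exact Finset.single_le_sum (fun b _ => (hv b).le) (Finset.mem_univ a)
  have hQ1 : (1:ℝ) ≤ S / I := TSS_one_le_Q hu hv
  calc u a - v a ≤ v a * (S / I) - v a := by linarith
    _ = v a * (S / I - 1) := by ring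
    _ ≤ M * (S / I - 1) := mul_le_mul_of_nonneg_right hvM (by linarith)

lemma TSS_abs_sub_le {M : ℝ} (hu : ∀ a, 0 < u a) (hv : ∀ a, 0 < v a)
    (hsu : ∑ a, u a = M) (hsv : ∑ a, v a = M) (a : A) :
    |u a - v a| ≤ M * ((⨆ a, u a / v a) / (⨅ a, u a / v a) - 1) := by
  rw [abs_sub_le_iff]
  refine ⟨TSS_sub_le hu hv hsu hsv a, ?_⟩
  have := TSS_sub_le hv hu hsv hsu a
  rwa [TSS_Q_symm hu hv] at this

end H

/-- The truncated simplex `Δ_ε = {u : u_a ≥ ε, Σ_a u_a = M}` equipped with the spread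
`D(u,v) = log((max_a u_a/v_a)/(min_a u_a/v_a))` is a nonempty complete metric space:
`Δ_ε` is nonempty, the spread is a metric on it, and every spread-Cauchy sequence in
`Δ_ε` converges (in spread) to a point of `Δ_ε`. -/
theorem truncated_simplex_spread_complete
    {A : Type*} [Fintype A] [Nonempty A] (M ε : ℝ) (hM : 0 < M)
    (hε0 : 0 < ε) (hεle : ε ≤ M / (Fintype.card A : ℝ))
    (Δ : Set (A → ℝ))
    (hΔ : Δ = {u : A → ℝ | (∀ a, ε ≤ u a) ∧ ∑ a, u a = M})
    (Dsp : (A → ℝ) → (A → ℝ) → ℝ)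
    (hD : ∀ u v : A → ℝ,
      Dsp u v = Real.log ((⨆ a, u a / v a) / (⨅ a, u a / v a))) :
    Δ.Nonempty ∧
    (∀ u ∈ Δ, ∀ v ∈ Δ, 0 ≤ Dsp u v ∧ (Dsp u v = 0 ↔ u = v) ∧ Dsp u v = Dsp v u) ∧
    (∀ u ∈ Δ, ∀ v ∈ Δ, ∀ w ∈ Δ, Dsp u w ≤ Dsp u v + Dsp v w) ∧
    (∀ u : ℕ → A → ℝ, (∀ n, u n ∈ Δ) →
      (∀ δ : ℝ, 0 < δ → ∃ N : ℕ, ∀ m ≥ N, ∀ n ≥ N, Dsp (u m) (u n) < δ) →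
      ∃ l ∈ Δ, Filter.Tendsto (fun n => Dsp (u n) l) Filter.atTop (nhds 0)) := by
  subst hΔ
  have hcard : (0:ℝ) < (Fintype.card A : ℝ) := by
    exact_mod_cast Fintype.card_pos
  -- positivity of members
  have hpos : ∀ {u : A → ℝ}, (∀ a, ε ≤ u a) → ∀ a, 0 < u a :=
    fun h a => lt_of_lt_of_le hε0 (h a)
  refine ⟨?_, ?_, ?_, ?_⟩
  · -- nonempty
    refine ⟨fun _ => M / (Fintype.card A : ℝ), fun _ => hεle, ?_⟩
    rw [Finset.sum_const, Finset.card_univ, nsmul_eq_mul,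
      mul_div_cancel₀ _ (ne_of_gt hcard)]
  · -- metric axioms
    rintro u ⟨hu, hsu⟩ v ⟨hv, hsv⟩
    have hu' := hpos hu
    have hv' := hpos hv
    refine ⟨?_, ⟨?_, ?_⟩, ?_⟩
    · rw [hD]
      exact Real.log_nonneg (TSS_one_le_Q hu' hv')
    · intro h
      rw [hD] at h
      have hQ1 : (⨆ a, u a / v a) / (⨅ a, u a / v a) = 1 := by
        rcases Real.log_eq_zero.1 h with h' | h' | h'
        · exact absurd h' (ne_of_gt (TSS_Q_pos hu' hv'))
        · exact h'
        · exact absurd h' (by nlinarith [TSS_Q_pos hu' hv'])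
      have hIpos : 0 < ⨅ a, u a / v a := TSS_iInf_pos fun a => div_pos (hu' a) (hv' a)
      have hSI : (⨆ a, u a / v a) = ⨅ a, u a / v a := by
        field_simp at hQ1
        exact hQ1
      have hconst : ∀ a, u a / v a = ⨅ b, u b / v b := fun a =>
        le_antisymm (hSI ▸ le_ciSup (TSS_bddAbove fun b => u b / v b) a)
          (ciInf_le (TSS_bddBelow fun b => u b / v b) a)
      set c := ⨅ b, u b / v b with hc
      have huv : ∀ a, u a = c * v a := fun a => by
        rw [← hconst a, div_mul_cancel₀ _ (ne_of_gt (hv' a))]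
      have hsum : M = c * M := by
        calc M = ∑ a, u a := hsu.symm
          _ = ∑ a, c * v a := Finset.sum_congr rfl fun a _ => huv a
          _ = c * ∑ a, v a := (Finset.mul_sum _ _ _).symm
          _ = c * M := by rw [hsv]
      have hc1 : c = 1 := by
        have : M * (c - 1) = 0 := by linarith
        rcases mul_eq_zero.1 this with h' | h'
        · exact absurd h' (ne_of_gt hM)
        · linarith
      funext a
      rw [huv a, hc1, one_mul]
    · rintro rfl
      rw [hD]
      have : ∀ a : A, u a / u a = 1 := fun a => div_self (ne_of_gt (hu' a))
      simp only [this, ciSup_const, ciInf_const, div_one, Real.log_one]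
    · rw [hD u v, hD v u, ← TSS_Q_symm hu' hv']
  · -- triangle inequality
    rintro u ⟨hu, hsu⟩ v ⟨hv, hsv⟩ w ⟨hw, hsw⟩
    have hu' := hpos hu; have hv' := hpos hv; have hw' := hpos hw
    rw [hD u w, hD u v, hD v w]
    set S1 := ⨆ a, u a / v a with hS1
    set S2 := ⨆ a, v a / w a with hS2
    set I1 := ⨅ a, u a / v a with hI1
    set I2 := ⨅ a, v a / w a with hI2
    have hS1p : 0 < S1 := TSS_iSup_pos fun a => div_pos (hu' a) (hv' a)
    have hS2p : 0 < S2 := TSS_iSup_pos fun a => div_pos (hv' a) (hw' a)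
    have hI1p : 0 < I1 := TSS_iInf_pos fun a => div_pos (hu' a) (hv' a)
    have hI2p : 0 < I2 := TSS_iInf_pos fun a => div_pos (hv' a) (hw' a)
    have hmul : ∀ a : A, u a / w a = (u a / v a) * (v a / w a) := fun a => by
      rw [div_mul_div_comm, mul_comm (u a) (v a),
        mul_div_mul_left _ _ (ne_of_gt (hv' a))]
    have hS : (⨆ a, u a / w a) ≤ S1 * S2 := by
      refine ciSup_le fun a => ?_
      rw [hmul a]
      refine mul_le_mul ?_ ?_ (div_pos (hv' a) (hw' a)).le hS1p.le
      · rw [hS1]; exact le_ciSup (TSS_bddAbove fun b => u b / v b) a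
      · rw [hS2]; exact le_ciSup (TSS_bddAbove fun b => v b / w b) a
    have hI : I1 * I2 ≤ ⨅ a, u a / w a := by
      refine le_ciInf fun a => ?_
      rw [hmul a]
      refine mul_le_mul ?_ ?_ hI2p.le (div_pos (hu' a) (hv' a)).le
      · rw [hI1]; exact ciInf_le (TSS_bddBelow fun b => u b / v b) a
      · rw [hI2]; exact ciInf_le (TSS_bddBelow fun b => v b / w b) a
    calc Real.log ((⨆ a, u a / w a) / ⨅ a, u a / w a)
        ≤ Real.log ((S1 * S2) / (I1 * I2)) := by
          refine Real.log_le_log (TSS_Q_pos hu' hw') ?_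
          exact div_le_div₀ (by positivity) hS (by positivity) hI
      _ = Real.log (S1 / I1 * (S2 / I2)) := by rw [div_mul_div_comm]
      _ = Real.log (S1 / I1) + Real.log (S2 / I2) :=
          Real.log_mul (by positivity) (by positivity)
  · -- completeness
    intro u hmem hC
    have hu' : ∀ n, ∀ a, 0 < u n a := fun n => hpos (hmem n).1
    -- coordinatewise Cauchy
    have hcoord : ∀ a : A, CauchySeq fun n => u n a := by
      intro a
      rw [Metric.cauchySeq_iff]
      intro η hη
      obtain ⟨N, hN⟩ := hC (Real.log (1 + η / M)) (by
        apply Real.log_pos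
        have : 0 < η / M := div_pos hη hM
        linarith)
      refine ⟨N, fun m hm n hn => ?_⟩
      have hb := TSS_abs_sub_le (hu' m) (hu' n) (hmem m).2 (hmem n).2 a
      have hDlt := hN m hm n hn
      rw [hD] at hDlt
      have hQpos := TSS_Q_pos (hu' m) (hu' n)
      have hQlt : (⨆ b, u m b / u n b) / (⨅ b, u m b / u n b) < 1 + η / M := by
        have := Real.exp_lt_exp.2 hDlt
        rwa [Real.exp_log hQpos, Real.exp_log (by positivity)] at this
      rw [Real.dist_eq]
      calc |u m a - u n a| ≤ M * ((⨆ b, u m b / u n b) / (⨅ b, u m b / u n b) - 1) := hb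
        _ < M * (1 + η / M - 1) := by
            apply mul_lt_mul_of_pos_left _ hM
            linarith
        _ = η := by field_simp; ring
    have hlim : ∀ a : A, ∃ x : ℝ, Filter.Tendsto (fun n => u n a) Filter.atTop (nhds x) :=
      fun a => cauchySeq_tendsto_of_complete (hcoord a)
    choose l hl using hlim
    have hlε : ∀ a, ε ≤ l a := fun a =>
      ge_of_tendsto (hl a) (Filter.Eventually.of_forall fun n => (hmem n).1 a)
    have hl' : ∀ a, 0 < l a := hpos hlε
    have hlsum : ∑ a, l a = M := by
      have h1 : Filter.Tendsto (fun n => ∑ a, u n a) Filter.atTop (nhds (∑ a, l a)) :=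
        tendsto_finset_sum _ (fun a _ => hl a)
      have h2 : (fun n => ∑ a, u n a) = fun _ => M := funext fun n => (hmem n).2
      rw [h2] at h1
      exact (tendsto_nhds_unique tendsto_const_nhds h1).symm
    refine ⟨l, ⟨hlε, hlsum⟩, ?_⟩
    rw [Metric.tendsto_atTop]
    intro δ hδ
    have hη : 0 < ε * (Real.exp (δ/4) - 1) := by
      have : (1:ℝ) < Real.exp (δ/4) := by
        rw [← Real.exp_zero]
        exact Real.exp_lt_exp.2 (by linarith)
      nlinarith
    set η := ε * (Real.exp (δ/4) - 1) with hηdef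
    have hev : ∀ᶠ n in Filter.atTop, ∀ a, |u n a - l a| < η := by
      rw [Filter.eventually_all]
      intro a
      have := (Metric.tendsto_atTop.1 (hl a)) η hη
      obtain ⟨N, hN⟩ := this
      rw [Filter.eventually_atTop]
      exact ⟨N, fun n hn => by have := hN n hn; rwa [Real.dist_eq] at this⟩
    obtain ⟨N, hN⟩ := Filter.eventually_atTop.1 hev
    refine ⟨N, fun n hn => ?_⟩
    have hb := hN n hn
    have hexp1 : (1:ℝ) ≤ Real.exp (δ/4) := Real.one_le_exp (by linarith)
    -- ratio bounds
    have hub : ∀ a, u n a / l a ≤ Real.exp (δ/4) := by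
      intro a
      rw [div_le_iff₀ (hl' a)]
      have h1 : u n a ≤ l a + η := by have := abs_le.1 (hb a).le; linarith [(abs_le.1 (hb a).le).2]
      have h2 : η ≤ l a * (Real.exp (δ/4) - 1) :=
        mul_le_mul_of_nonneg_right (hlε a) (by linarith)
      nlinarith [hl' a]
    have hlb : ∀ a, Real.exp (-(δ/4)) ≤ u n a / l a := by
      intro a
      rw [le_div_iff₀ (hl' a)]
      have h1 : l a ≤ u n a + η := by have := (abs_le.1 (hb a).le).1; linarith
      have h2 : η ≤ u n a * (Real.exp (δ/4) - 1) :=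
        mul_le_mul_of_nonneg_right ((hmem n).1 a) (by linarith)
      have h3 : l a ≤ u n a * Real.exp (δ/4) := by linarith
      have h4 : Real.exp (-(δ/4)) * l a ≤ Real.exp (-(δ/4)) * (u n a * Real.exp (δ/4)) :=
        mul_le_mul_of_nonneg_left h3 (Real.exp_pos _).le
      have key : Real.exp (-(δ/4)) * Real.exp (δ/4) = 1 := by
        rw [← Real.exp_add]; simp
      have h5 : Real.exp (-(δ/4)) * (u n a * Real.exp (δ/4)) = u n a := by
        rw [mul_comm (u n a), ← mul_assoc, key, one_mul]
      linarith
    have hSle : (⨆ a, u n a / l a) ≤ Real.exp (δ/4) := ciSup_le hub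
    have hIge : Real.exp (-(δ/4)) ≤ ⨅ a, u n a / l a := le_ciInf hlb
    have hIpos : 0 < ⨅ a, u n a / l a := TSS_iInf_pos fun a => div_pos (hu' n a) (hl' a)
    have hDle : Dsp (u n) l ≤ δ/2 := by
      rw [hD]
      calc Real.log ((⨆ a, u n a / l a) / ⨅ a, u n a / l a)
          ≤ Real.log (Real.exp (δ/4) / Real.exp (-(δ/4))) := by
            refine Real.log_le_log (TSS_Q_pos (hu' n) hl') ?_
            exact div_le_div₀ (Real.exp_pos _).le hSle (Real.exp_pos _) hIge
        _ = δ/2 := by rw [← Real.exp_sub, Real.log_exp]; ring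
    have hDnn : 0 ≤ Dsp (u n) l := by
      rw [hD]
      exact Real.log_nonneg (TSS_one_le_Q (hu' n) hl')
    rw [Real.dist_eq, sub_zero, abs_of_nonneg hDnn]
    linarith
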